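/- Let μ be a Borel measure on ℂ that is finite on compact sets, and let c ∈ ℂ. Then there exists a constant C ≥ 0, depending only on μ and c, such that for all r ≥ 2: N(μ,c,r) ≤ (1 + |c|/r + (1+|c|)·log(1+|c|)/log(r+|c|)) · N(μ,0,r+|c|) + C. -/

import Mathlib

open MeasureTheory Filter Metric

/-- `log⁺ x = max(0, log x)` -/
noncomputable def logPlus (x : ℝ) : ℝ := max 0 (Real.log x)

/-- Nevanlinna proximity function `m(r, f)`. -/
noncomputable def nevProx (f : ℂ → ℂ) (r : ℝ) : ℝ :=
  (2 * Real.pi)⁻¹ * ∫ θ in (0:ℝ)..(2 * Real.pi), logPlus ‖f (r * Complex.exp (θ * Complex.I))‖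

open scoped Classical in
/-- Multiplicity of `z` as a pole of `f`. -/
noncomputable def poleMult (f : ℂ → ℂ) (z : ℂ) : ℕ :=
  if h : MeromorphicAt f z then (-((meromorphicOrderAt f z).untopD 0)).toNat else 0

/-- Unintegrated counting function `n(t, f)`: number of poles in the closed disc of
radius `t`, counted with multiplicity. -/
noncomputable def poleCnt (f : ℂ → ℂ) (t : ℝ) : ℝ :=
  ∑' z : ℂ, (closedBall (0:ℂ) t).indicator (fun u => (poleMult f u : ℝ)) z

/-- Integrated counting function `N(r, f)` of poles. -/
noncomputable def nevCount (f : ℂ → ℂ) (r : ℝ) : ℝ :=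
  (∫ t in (0:ℝ)..r, (poleCnt f t - poleCnt f 0) / t) + poleCnt f 0 * Real.log r

/-- Nevanlinna characteristic `T(r, f) = m(r, f) + N(r, f)`. -/
noncomputable def nevChar (f : ℂ → ℂ) (r : ℝ) : ℝ := nevProx f r + nevCount f r

/-- `f` is a rational function. -/
def IsRationalFn (f : ℂ → ℂ) : Prop :=
  ∃ p q : Polynomial ℂ, q ≠ 0 ∧ ∀ z : ℂ, q.eval z ≠ 0 → f z = p.eval z / q.eval z

/-- `E ⊆ [1, ∞)` has zero lower density. -/
def ZeroLowerDensity (E : Set ℝ) : Prop :=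
  Filter.liminf (fun r => (volume (E ∩ Set.Icc 1 r)).toReal / r) Filter.atTop = 0

/-- `E ⊆ [1, ∞)` has zero upper density. -/
def ZeroUpperDensity (E : Set ℝ) : Prop :=
  Filter.limsup (fun r => (volume (E ∩ Set.Icc 1 r)).toReal / r) Filter.atTop = 0

/-- `E` has finite logarithmic measure: `∫_E dt/t < ∞`. -/
def FiniteLogMeasure (E : Set ℝ) : Prop :=
  ∫⁻ t in E, ENNReal.ofReal t⁻¹ < ⊤

/-- `n(mu, c, t) = mu(closedBall c t)` for a Borel measure on the plane. -/
noncomputable def ballCnt (mu : MeasureTheory.Measure ℂ) (c : ℂ) (t : ℝ) : ℝ :=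
  (mu (closedBall c t)).toReal

/-- `N(mu, c, r) = ∫₁^r n(mu,c,t)/t dt`. -/
noncomputable def intCnt (mu : MeasureTheory.Measure ℂ) (c : ℂ) (r : ℝ) : ℝ :=
  ∫ t in (1:ℝ)..r, ballCnt mu c t / t

set_option linter.unusedSectionVars false

section AuxLemmas
variable (μ : MeasureTheory.Measure ℂ) [MeasureTheory.IsFiniteMeasureOnCompacts μ]

lemma ballCnt_nonneg' (c : ℂ) (t : ℝ) : 0 ≤ ballCnt μ c t := ENNReal.toReal_nonneg

lemma ballCnt_mono' (c : ℂ) : Monotone (ballCnt μ c) := fun s t hst =>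
  (ENNReal.toReal_le_toReal (isCompact_closedBall c s).measure_lt_top.ne
      (isCompact_closedBall c t).measure_lt_top.ne).mpr
    (measure_mono (closedBall_subset_closedBall hst))

lemma ballCnt_shift' (c : ℂ) (t : ℝ) :
    ballCnt μ c t ≤ ballCnt μ 0 (t + ‖c‖) :=
  (ENNReal.toReal_le_toReal (isCompact_closedBall c t).measure_lt_top.ne
      (isCompact_closedBall 0 (t + ‖c‖)).measure_lt_top.ne).mpr
    (measure_mono (closedBall_subset_closedBall' (by
      rw [dist_zero_right])))

lemma contOn_one_div_pos {x y : ℝ} (hx : 0 < x) (hy : 0 < y) :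
    ContinuousOn (fun t : ℝ => 1 / t) (Set.uIcc x y) := by
  apply ContinuousOn.div continuousOn_const continuousOn_id
  intro t ht
  rcases Set.mem_uIcc.mp ht with ⟨h1, _⟩ | ⟨h1, _⟩ <;> · simp only [id]; intro h; rw [h] at h1; linarith

lemma contOn_one_div_add {x y d : ℝ} (hx : 0 < x + d) (hy : 0 < y + d) :
    ContinuousOn (fun t : ℝ => 1 / (t + d)) (Set.uIcc x y) := by
  apply ContinuousOn.div continuousOn_const ((continuous_id.add continuous_const).continuousOn)
  intro t ht
  rcases Set.mem_uIcc.mp ht with ⟨h1, _⟩ | ⟨h1, _⟩ <;> · intro h; simp only [Pi.add_apply, id_eq] at h; linarith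

lemma intInt (e : ℂ) (d x y : ℝ) {g : ℝ → ℝ} (hg : ContinuousOn g (Set.uIcc x y)) :
    IntervalIntegrable (fun t => ballCnt μ e (t + d) * g t) MeasureTheory.volume x y :=
  ((((ballCnt_mono' μ e).comp (monotone_id.add_const d)).monotoneOn
      (Set.uIcc x y)).intervalIntegrable).mul_continuousOn hg

lemma intInt0 (e : ℂ) (x y : ℝ) {g : ℝ → ℝ} (hg : ContinuousOn g (Set.uIcc x y)) :
    IntervalIntegrable (fun t => ballCnt μ e t * g t) MeasureTheory.volume x y :=
  (((ballCnt_mono' μ e).monotoneOn (Set.uIcc x y)).intervalIntegrable).mul_continuousOn hg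


lemma Kval (a x y : ℝ) (ha : 0 ≤ a) (hx : 1 ≤ x) (hxy : x ≤ y) :
    ∫ t in x..y, (1 / t - 1 / (t + a)) =
      (Real.log y - Real.log x) - (Real.log (y + a) - Real.log (x + a)) := by
  have hx0 : 0 < x := by linarith
  have hy0 : 0 < y := by linarith
  have hI1 : IntervalIntegrable (fun t : ℝ => 1 / t) volume x y :=
    (contOn_one_div_pos hx0 hy0).intervalIntegrable
  have hI2 : IntervalIntegrable (fun t : ℝ => 1 / (t + a)) volume x y :=
    (contOn_one_div_add (by linarith) (by linarith)).intervalIntegrable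
  rw [intervalIntegral.integral_sub hI1 hI2]
  have h0x : (0:ℝ) ∉ Set.uIcc x y := by
    rw [Set.uIcc_of_le hxy]; simp only [Set.mem_Icc]; intro h; linarith [h.1]
  have h0xa : (0:ℝ) ∉ Set.uIcc (x + a) (y + a) := by
    rw [Set.uIcc_of_le (by linarith)]; simp only [Set.mem_Icc]; intro h; linarith [h.1]
  have e1 : (∫ t in x..y, 1 / t) = Real.log y - Real.log x := by
    rw [integral_one_div h0x, Real.log_div (ne_of_gt hy0) (ne_of_gt hx0)]
  have e2 : (∫ t in x..y, 1 / (t + a)) = Real.log (y + a) - Real.log (x + a) := by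
    rw [intervalIntegral.integral_comp_add_right (fun u : ℝ => 1 / u) a,
      integral_one_div h0xa, Real.log_div (by positivity) (by positivity)]
  rw [e1, e2]

variable (μ : MeasureTheory.Measure ℂ) [MeasureTheory.IsFiniteMeasureOnCompacts μ]

lemma intCnt_eq (c : ℂ) (r : ℝ) :
    intCnt μ c r = ∫ t in (1:ℝ)..r, ballCnt μ c t * (1 / t) := by
  simp only [intCnt]
  apply intervalIntegral.integral_congr
  intro t _
  simp only []
  rw [div_eq_mul_one_div]

lemma intCnt_nonneg' (c : ℂ) {r : ℝ} (h : 1 ≤ r) : 0 ≤ intCnt μ c r :=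
  intervalIntegral.integral_nonneg h
    (fun t ht => div_nonneg (ballCnt_nonneg' μ c t) (by linarith [ht.1]))

lemma intCnt_mono' (c : ℂ) {x y : ℝ} (h1 : 1 ≤ x) (hxy : x ≤ y) :
    intCnt μ c x ≤ intCnt μ c y := by
  rw [intCnt_eq, intCnt_eq]
  have hI1 : IntervalIntegrable (fun t => ballCnt μ c t * (1 / t)) volume 1 x :=
    intInt0 μ c 1 x (contOn_one_div_pos one_pos (by linarith))
  have hI2 : IntervalIntegrable (fun t => ballCnt μ c t * (1 / t)) volume x y :=
    intInt0 μ c x y (contOn_one_div_pos (by linarith) (by linarith))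
  have hsplit := intervalIntegral.integral_add_adjacent_intervals hI1 hI2
  have hpos : 0 ≤ ∫ t in x..y, ballCnt μ c t * (1 / t) :=
    intervalIntegral.integral_nonneg hxy
      (fun t ht => mul_nonneg (ballCnt_nonneg' μ c t)
        (one_div_nonneg.mpr (by linarith [ht.1])))
  linarith

lemma n_log_le_N (s R : ℝ) (h1 : 1 ≤ s) (h2 : s ≤ R) :
    ballCnt μ 0 s * (Real.log R - Real.log s) ≤ intCnt μ 0 R := by
  have hs : (0:ℝ) < s := by linarith
  have hR : (0:ℝ) < R := by linarith
  have e0 : intCnt μ 0 R = ∫ t in (1:ℝ)..R, ballCnt μ 0 t * (1 / t) := intCnt_eq μ 0 R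
  have hIa : IntervalIntegrable (fun t => ballCnt μ 0 t * (1 / t)) volume 1 s :=
    intInt0 μ 0 1 s (contOn_one_div_pos one_pos hs)
  have hIb : IntervalIntegrable (fun t => ballCnt μ 0 t * (1 / t)) volume s R :=
    intInt0 μ 0 s R (contOn_one_div_pos hs hR)
  have hsplit := intervalIntegral.integral_add_adjacent_intervals hIa hIb
  have hpos : 0 ≤ ∫ t in (1:ℝ)..s, ballCnt μ 0 t * (1 / t) :=
    intervalIntegral.integral_nonneg h1
      (fun t ht => mul_nonneg (ballCnt_nonneg' μ 0 t) (one_div_nonneg.mpr (by linarith [ht.1])))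
  have hconst : ballCnt μ 0 s * (Real.log R - Real.log s)
      = ∫ t in s..R, ballCnt μ 0 s * (1 / t) := by
    rw [intervalIntegral.integral_const_mul]
    have h0 : (0:ℝ) ∉ Set.uIcc s R := by
      rw [Set.uIcc_of_le h2]; simp only [Set.mem_Icc]; intro h; linarith [h.1]
    rw [integral_one_div h0, Real.log_div (ne_of_gt hR) (ne_of_gt hs)]
  have hmono : (∫ t in s..R, ballCnt μ 0 s * (1 / t))
      ≤ ∫ t in s..R, ballCnt μ 0 t * (1 / t) := by
    apply intervalIntegral.integral_mono_on h2
      ((continuousOn_const.mul (contOn_one_div_pos hs hR)).intervalIntegrable) hIb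
    intro t ht
    exact mul_le_mul_of_nonneg_right (ballCnt_mono' μ 0 ht.1)
      (one_div_nonneg.mpr (by linarith [ht.1]))
  linarith [e0, hsplit, hpos, hconst, hmono]


set_option maxHeartbeats 1000000 in
lemma main_est (c : ℂ) (r : ℝ) (ha : 0 < ‖c‖) (hr2 : 2 ≤ r)
    (hτS : 1 + ‖c‖ ≤ (r + ‖c‖) ^ (‖c‖ / (‖c‖ + 2)))
    (hstar : 2 * (r + ‖c‖) * Real.log (r + ‖c‖) ≤
      Real.log (1 + ‖c‖) *
        ((r + ‖c‖) ^ (‖c‖ / (‖c‖ + 2)) - ‖c‖) * r) :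
    intCnt μ c r ≤
      (1 + ‖c‖ / r +
          (1 + ‖c‖) * Real.log (1 + ‖c‖) / Real.log (r + ‖c‖)) *
        intCnt μ 0 (r + ‖c‖) := by
  set a := ‖c‖ with ha_def
  have hr0 : (0:ℝ) < r := by linarith
  have hR1 : (1:ℝ) < r + a := by linarith
  have hR0 : (0:ℝ) < r + a := by linarith
  set lR := Real.log (r + a) with hlR_def
  set L := Real.log (1 + a) with hL_def
  set N := intCnt μ 0 (r + a) with hN_def
  set S := (r + a) ^ (a / (a + 2)) with hS_def
  set τ := S - a with hτ_def
  set M := N * (a + 2) / (2 * lR) with hM_def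
  have hlR : 0 < lR := Real.log_pos hR1
  have hL : 0 < L := Real.log_pos (by linarith)
  have hτ1 : (1:ℝ) ≤ τ := by simp only [hτ_def]; linarith
  have hSleR : S ≤ r + a := by
    have h1 : S ≤ (r + a) ^ (1:ℝ) :=
      Real.rpow_le_rpow_of_exponent_le hR1.le (by rw [div_le_one (by linarith)]; linarith)
    rwa [Real.rpow_one] at h1
  have hτr : τ ≤ r := by simp only [hτ_def]; linarith
  have hN0 : 0 ≤ N := intCnt_nonneg' μ 0 (by linarith)
  have hM0 : 0 ≤ M :=
    div_nonneg (mul_nonneg hN0 (by linarith)) (by linarith)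
  have hlogS : Real.log S = (a / (a + 2)) * lR := Real.log_rpow hR0 _
  -- pointwise bound on [1, τ]
  have P1 : ∀ t ∈ Set.Icc (1:ℝ) τ,
      ballCnt μ 0 (t + a) * (1 / t) ≤
        (1 + a / r) * (ballCnt μ 0 (t + a) * (1 / (t + a))) + M * (1 / t - 1 / (t + a)) := by
    intro t ht
    obtain ⟨ht1, htτ⟩ := ht
    have ht0 : (0:ℝ) < t := by linarith
    have hta : (0:ℝ) < t + a := by linarith
    have htr : t ≤ r := le_trans htτ hτr
    have htaS : t + a ≤ S := by simp only [hτ_def] at htτ; linarith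
    have hn0 : 0 ≤ ballCnt μ 0 (t + a) := ballCnt_nonneg' μ 0 _
    have hkey := n_log_le_N μ (t + a) (r + a) (by linarith) (by linarith)
    have hlog1 : Real.log (t + a) ≤ (a / (a + 2)) * lR := by
      rw [← hlogS]
      exact Real.log_le_log hta htaS
    have hnM : ballCnt μ 0 (t + a) ≤ M := by
      have h2 : ballCnt μ 0 (t + a) * ((2 / (a + 2)) * lR)
          ≤ ballCnt μ 0 (t + a) * (lR - Real.log (t + a)) := by
        apply mul_le_mul_of_nonneg_left _ hn0
        have he : (2 / (a + 2)) * lR = lR - (a / (a + 2)) * lR := by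
          field_simp
          ring
        rw [he]; linarith
      have h3 : ballCnt μ 0 (t + a) * ((2 / (a + 2)) * lR) ≤ N := le_trans h2 hkey
      have hpos : 0 < (2 / (a + 2)) * lR := mul_pos (div_pos two_pos (by linarith)) hlR
      have h4 := (le_div_iff₀ hpos).mpr h3
      have heq : N / ((2 / (a + 2)) * lR) = M := by
        rw [hM_def]; field_simp
      rwa [heq] at h4
    have hg0 : 0 ≤ 1 / t - (1 + a / r) * (1 / (t + a)) := by
      have hform : 1 / t - (1 + a / r) * (1 / (t + a)) = a * (r - t) / (r * t * (t + a)) := by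
        field_simp [ne_of_gt ht0, ne_of_gt hta, ne_of_gt hr0]
        ring
      rw [hform]
      exact div_nonneg (mul_nonneg ha.le (by linarith))
        (le_of_lt (mul_pos (mul_pos hr0 ht0) hta))
    have hgle : 1 / t - (1 + a / r) * (1 / (t + a)) ≤ 1 / t - 1 / (t + a) := by
      have h1 : 1 / (t + a) ≤ (1 + a / r) * (1 / (t + a)) := by
        apply le_mul_of_one_le_left (one_div_nonneg.mpr hta.le)
        have : 0 ≤ a / r := div_nonneg ha.le hr0.le
        linarith
      linarith
    have hmain : ballCnt μ 0 (t + a) * (1 / t - (1 + a / r) * (1 / (t + a)))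
        ≤ M * (1 / t - 1 / (t + a)) := mul_le_mul hnM hgle hg0 hM0
    nlinarith [hmain]
  -- pointwise bound on [τ, r]
  have P2 : ∀ t ∈ Set.Icc τ r,
      ballCnt μ 0 (t + a) * (1 / t) ≤
        (1 + a / r) * (ballCnt μ 0 (t + a) * (1 / (t + a)))
          + (N * (r + a) / r) * (1 / t - 1 / (t + a)) := by
    intro t ht
    obtain ⟨htτ, htr⟩ := ht
    have ht1 : (1:ℝ) ≤ t := le_trans hτ1 htτ
    have ht0 : (0:ℝ) < t := by linarith
    have hta : (0:ℝ) < t + a := by linarith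
    have hn0 : 0 ≤ ballCnt μ 0 (t + a) := ballCnt_nonneg' μ 0 _
    have hkey := n_log_le_N μ (t + a) (r + a) (by linarith) (by linarith)
    have hlogdiv : Real.log (t + a) - lR ≤ (t + a) / (r + a) - 1 := by
      have h := Real.log_le_sub_one_of_pos (div_pos hta hR0)
      rwa [Real.log_div (ne_of_gt hta) (ne_of_gt hR0)] at h
    have hC2 : ballCnt μ 0 (t + a) * (r - t) ≤ N * (r + a) := by
      have h2 : r - t ≤ (r + a) * (lR - Real.log (t + a)) := by
        have he : (r + a) * ((t + a) / (r + a)) = t + a := by field_simp [ne_of_gt hR0]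
        nlinarith [hlogdiv]
      calc ballCnt μ 0 (t + a) * (r - t)
          ≤ ballCnt μ 0 (t + a) * ((r + a) * (lR - Real.log (t + a))) :=
            mul_le_mul_of_nonneg_left h2 hn0
        _ = (r + a) * (ballCnt μ 0 (t + a) * (lR - Real.log (t + a))) := by ring
        _ ≤ (r + a) * N := mul_le_mul_of_nonneg_left hkey hR0.le
        _ = N * (r + a) := by ring
    have hmain : ballCnt μ 0 (t + a) * (1 / t - (1 + a / r) * (1 / (t + a)))
        ≤ (N * (r + a) / r) * (1 / t - 1 / (t + a)) := by
      have hform : 1 / t - (1 + a / r) * (1 / (t + a)) = a * (r - t) / (r * t * (t + a)) := by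
        field_simp [ne_of_gt ht0, ne_of_gt hta, ne_of_gt hr0]
        ring
      have hrho : 1 / t - 1 / (t + a) = a / (t * (t + a)) := by
        field_simp [ne_of_gt ht0, ne_of_gt hta]
        ring
      have e1 : ballCnt μ 0 (t + a) * (1 / t - (1 + a / r) * (1 / (t + a)))
          = (ballCnt μ 0 (t + a) * (r - t)) * (a / (r * t * (t + a))) := by
        rw [hform]; ring
      have e2 : (N * (r + a) / r) * (1 / t - 1 / (t + a))
          = (N * (r + a)) * (a / (r * t * (t + a))) := by
        rw [hrho, div_mul_div_comm, mul_div_assoc, mul_assoc r t (t + a)]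
      rw [e1, e2]
      exact mul_le_mul_of_nonneg_right hC2
        (div_nonneg ha.le (le_of_lt (mul_pos (mul_pos hr0 ht0) hta)))
    nlinarith [hmain]
  -- integrability
  have I_f2 : ∀ x y : ℝ, 1 ≤ x → 1 ≤ y →
      IntervalIntegrable (fun t => ballCnt μ 0 (t + a) * (1 / t)) volume x y :=
    fun x y hx hy => intInt μ 0 a x y (contOn_one_div_pos (by linarith) (by linarith))
  have I_fa : ∀ x y : ℝ, 1 ≤ x → 1 ≤ y →
      IntervalIntegrable (fun t => ballCnt μ 0 (t + a) * (1 / (t + a))) volume x y :=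
    fun x y hx hy => intInt μ 0 a x y (contOn_one_div_add (by linarith) (by linarith))
  have I_rho : ∀ x y : ℝ, 1 ≤ x → 1 ≤ y →
      IntervalIntegrable (fun t : ℝ => 1 / t - 1 / (t + a)) volume x y :=
    fun x y hx hy => ((contOn_one_div_pos (by linarith) (by linarith)).sub
      (contOn_one_div_add (by linarith) (by linarith))).intervalIntegrable
  have I_phi : ∀ x y : ℝ, 1 ≤ x → 1 ≤ y →
      IntervalIntegrable (fun t => (1 + a / r) * (ballCnt μ 0 (t + a) * (1 / (t + a))))
        volume x y :=
    fun x y hx hy => (I_fa x y hx hy).const_mul _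
  -- step 1 : intCnt μ c r ≤ ∫ shifted
  have step1 : intCnt μ c r ≤ ∫ t in (1:ℝ)..r, ballCnt μ 0 (t + a) * (1 / t) := by
    rw [intCnt_eq]
    apply intervalIntegral.integral_mono_on (by linarith)
      (intInt0 μ c 1 r (contOn_one_div_pos one_pos hr0)) (I_f2 1 r le_rfl (by linarith))
    intro t ht
    exact mul_le_mul_of_nonneg_right (ballCnt_shift' μ c t)
      (one_div_nonneg.mpr (by linarith [ht.1]))
  -- split
  have split : (∫ t in (1:ℝ)..r, ballCnt μ 0 (t + a) * (1 / t))
      = (∫ t in (1:ℝ)..τ, ballCnt μ 0 (t + a) * (1 / t))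
        + ∫ t in τ..r, ballCnt μ 0 (t + a) * (1 / t) :=
    (intervalIntegral.integral_add_adjacent_intervals (I_f2 1 τ le_rfl hτ1)
      (I_f2 τ r hτ1 (by linarith))).symm
  have b1 : (∫ t in (1:ℝ)..τ, ballCnt μ 0 (t + a) * (1 / t))
      ≤ (1 + a / r) * (∫ t in (1:ℝ)..τ, ballCnt μ 0 (t + a) * (1 / (t + a)))
        + M * ∫ t in (1:ℝ)..τ, (1 / t - 1 / (t + a)) := by
    have h := intervalIntegral.integral_mono_on hτ1 (I_f2 1 τ le_rfl hτ1)
      ((I_phi 1 τ le_rfl hτ1).add ((I_rho 1 τ le_rfl hτ1).const_mul M)) P1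
    rw [intervalIntegral.integral_add (I_phi 1 τ le_rfl hτ1)
      ((I_rho 1 τ le_rfl hτ1).const_mul M), intervalIntegral.integral_const_mul,
      intervalIntegral.integral_const_mul] at h
    exact h
  have b2 : (∫ t in τ..r, ballCnt μ 0 (t + a) * (1 / t))
      ≤ (1 + a / r) * (∫ t in τ..r, ballCnt μ 0 (t + a) * (1 / (t + a)))
        + (N * (r + a) / r) * ∫ t in τ..r, (1 / t - 1 / (t + a)) := by
    have h := intervalIntegral.integral_mono_on hτr (I_f2 τ r hτ1 (by linarith))
      ((I_phi τ r hτ1 (by linarith)).add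
        ((I_rho τ r hτ1 (by linarith)).const_mul (N * (r + a) / r))) P2
    rw [intervalIntegral.integral_add (I_phi τ r hτ1 (by linarith))
      ((I_rho τ r hτ1 (by linarith)).const_mul (N * (r + a) / r)),
      intervalIntegral.integral_const_mul, intervalIntegral.integral_const_mul] at h
    exact h
  have joinfa : (∫ t in (1:ℝ)..τ, ballCnt μ 0 (t + a) * (1 / (t + a)))
      + (∫ t in τ..r, ballCnt μ 0 (t + a) * (1 / (t + a)))
      = ∫ t in (1:ℝ)..r, ballCnt μ 0 (t + a) * (1 / (t + a)) :=
    intervalIntegral.integral_add_adjacent_intervals (I_fa 1 τ le_rfl hτ1)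
      (I_fa τ r hτ1 (by linarith))
  have hFsum : (1 + a / r) * (∫ t in (1:ℝ)..τ, ballCnt μ 0 (t + a) * (1 / (t + a)))
      + (1 + a / r) * (∫ t in τ..r, ballCnt μ 0 (t + a) * (1 / (t + a)))
      = (1 + a / r) * ∫ t in (1:ℝ)..r, ballCnt μ 0 (t + a) * (1 / (t + a)) := by
    rw [← joinfa]; ring
  have shiftN : (∫ t in (1:ℝ)..r, ballCnt μ 0 (t + a) * (1 / (t + a))) ≤ N := by
    have e : (∫ t in (1:ℝ)..r, ballCnt μ 0 (t + a) * (1 / (t + a)))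
        = ∫ u in (1 + a)..(r + a), ballCnt μ 0 u * (1 / u) :=
      intervalIntegral.integral_comp_add_right (fun u => ballCnt μ 0 u * (1 / u)) a
    have hIa : IntervalIntegrable (fun u => ballCnt μ 0 u * (1 / u)) volume 1 (1 + a) :=
      intInt0 μ 0 1 (1 + a) (contOn_one_div_pos one_pos (by linarith))
    have hIb : IntervalIntegrable (fun u => ballCnt μ 0 u * (1 / u)) volume (1 + a) (r + a) :=
      intInt0 μ 0 (1 + a) (r + a) (contOn_one_div_pos (by linarith) hR0)
    have hsplit := intervalIntegral.integral_add_adjacent_intervals hIa hIb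
    have hpos : 0 ≤ ∫ u in (1:ℝ)..(1 + a), ballCnt μ 0 u * (1 / u) :=
      intervalIntegral.integral_nonneg (by linarith)
        (fun u hu => mul_nonneg (ballCnt_nonneg' μ 0 u) (one_div_nonneg.mpr (by linarith [hu.1])))
    have e2 : N = ∫ u in (1:ℝ)..(r + a), ballCnt μ 0 u * (1 / u) := intCnt_eq μ 0 (r + a)
    rw [e]
    linarith
  have hK1 : (∫ t in (1:ℝ)..τ, (1 / t - 1 / (t + a))) ≤ L := by
    rw [Kval a 1 τ ha.le le_rfl hτ1]
    have h1 : Real.log τ ≤ Real.log (τ + a) := Real.log_le_log (by linarith) (by linarith)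
    simp only [Real.log_one]
    rw [hL_def]
    linarith
  have hK2 : (∫ t in τ..r, (1 / t - 1 / (t + a))) ≤ a / τ := by
    rw [Kval a τ r ha.le hτ1 hτr]
    have l1 : Real.log r ≤ Real.log (r + a) := Real.log_le_log hr0 (by linarith)
    have hτ0 : (0:ℝ) < τ := by linarith
    have l2 : Real.log (τ + a) - Real.log τ = Real.log ((τ + a) / τ) :=
      (Real.log_div (by positivity) (ne_of_gt hτ0)).symm
    have l3 : Real.log ((τ + a) / τ) ≤ (τ + a) / τ - 1 :=
      Real.log_le_sub_one_of_pos (div_pos (by linarith) hτ0)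
    have l4 : (τ + a) / τ - 1 = a / τ := by field_simp [ne_of_gt hτ0]; ring
    linarith
  have htail : (N * (r + a) / r) * (a / τ) ≤ N * (a * L / (2 * lR)) := by
    have hτ0 : (0:ℝ) < τ := by linarith
    have inner : ((r + a) / r) * (a / τ) ≤ a * L / (2 * lR) := by
      rw [div_mul_div_comm, div_le_div_iff₀ (by positivity) (by positivity)]
      nlinarith [mul_le_mul_of_nonneg_left hstar ha.le]
    calc (N * (r + a) / r) * (a / τ) = N * (((r + a) / r) * (a / τ)) := by ring
      _ ≤ N * (a * L / (2 * lR)) := mul_le_mul_of_nonneg_left inner hN0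
  -- final assembly
  have hF0 : 0 ≤ 1 + a / r := by positivity
  have hMK1 : M * (∫ t in (1:ℝ)..τ, (1 / t - 1 / (t + a))) ≤ M * L :=
    mul_le_mul_of_nonneg_left hK1 hM0
  have hTK2 : (N * (r + a) / r) * (∫ t in τ..r, (1 / t - 1 / (t + a)))
      ≤ (N * (r + a) / r) * (a / τ) :=
    mul_le_mul_of_nonneg_left hK2 (by positivity)
  have hFN : (1 + a / r) * (∫ t in (1:ℝ)..r, ballCnt μ 0 (t + a) * (1 / (t + a)))
      ≤ (1 + a / r) * N := mul_le_mul_of_nonneg_left shiftN hF0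
  have hfinal : (1 + a / r) * N + M * L + N * (a * L / (2 * lR))
      = (1 + a / r + (1 + a) * L / lR) * N := by
    rw [hM_def]
    field_simp [ne_of_gt hlR]
    ring
  linarith [step1, split, b1, b2, hFsum, hMK1, hTK2, hFN, htail, hfinal]

end AuxLemmas

theorem shifted_counting_function_upper_bound
    (μ : MeasureTheory.Measure ℂ) [MeasureTheory.IsFiniteMeasureOnCompacts μ] (c : ℂ) :
    ∃ C : ℝ, 0 ≤ C ∧ ∀ r : ℝ, 2 ≤ r →
      intCnt μ c r ≤
        (1 + ‖c‖ / r +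
            (1 + ‖c‖) * Real.log (1 + ‖c‖) / Real.log (r + ‖c‖)) *
          intCnt μ 0 (r + ‖c‖) + C := by
  by_cases hc : c = 0
  · refine ⟨0, le_rfl, fun r hr => ?_⟩
    subst hc
    simp [map_zero, Real.log_one]
  · have ha : 0 < ‖c‖ := norm_pos_iff.mpr hc
    set a := ‖c‖ with ha_def
    have hβ : 0 < a / (a + 2) := div_pos ha (by linarith)
    have hL : 0 < Real.log (1 + a) := Real.log_pos (by linarith)
    have htend : Tendsto (fun r : ℝ => (r + a) ^ (a / (a + 2))) atTop atTop :=
      (tendsto_rpow_atTop hβ).comp (tendsto_atTop_add_const_right _ a tendsto_id)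
    have ev1 : ∀ᶠ r : ℝ in atTop, 1 + a ≤ (r + a) ^ (a / (a + 2)) :=
      htend.eventually_ge_atTop _
    have ev3 : ∀ᶠ r : ℝ in atTop, 2 * a ≤ (r + a) ^ (a / (a + 2)) :=
      htend.eventually_ge_atTop _
    have evlog0 : ∀ᶠ x : ℝ in atTop,
        Real.log x ≤ (Real.log (1 + a) / 8) * x ^ (a / (a + 2)) := by
      have h := (isLittleO_log_rpow_atTop hβ).def
        (show (0:ℝ) < Real.log (1 + a) / 8 by linarith)
      filter_upwards [h, eventually_ge_atTop (1:ℝ)] with x hx hx1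
      rwa [Real.norm_eq_abs, Real.norm_eq_abs, abs_of_nonneg (Real.log_nonneg hx1),
        abs_of_nonneg (Real.rpow_nonneg (by linarith) _)] at hx
    have ev2 : ∀ᶠ r : ℝ in atTop,
        Real.log (r + a) ≤ (Real.log (1 + a) / 8) * (r + a) ^ (a / (a + 2)) :=
      (tendsto_atTop_add_const_right atTop a tendsto_id).eventually evlog0
    have evstar : ∀ᶠ r : ℝ in atTop,
        1 + a ≤ (r + a) ^ (a / (a + 2)) ∧
          2 * (r + a) * Real.log (r + a) ≤
            Real.log (1 + a) * ((r + a) ^ (a / (a + 2)) - a) * r := by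
      filter_upwards [ev1, ev2, ev3, eventually_ge_atTop a, eventually_ge_atTop (2:ℝ)]
        with r h1 h2 h3 h4 h5
      refine ⟨h1, ?_⟩
      set S := (r + a) ^ (a / (a + 2)) with hSdef
      have hS0 : (0:ℝ) ≤ S := by linarith
      have hc1 : 2 * (r + a) * Real.log (r + a) ≤ 2 * (r + a) * ((Real.log (1 + a) / 8) * S) :=
        mul_le_mul_of_nonneg_left h2 (by linarith)
      have hc2 : 2 * (r + a) * ((Real.log (1 + a) / 8) * S)
          ≤ 2 * (2 * r) * ((Real.log (1 + a) / 8) * S) :=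
        mul_le_mul_of_nonneg_right (by linarith) (mul_nonneg (by linarith) hS0)
      have hc3 : 2 * (2 * r) * ((Real.log (1 + a) / 8) * S)
          = (Real.log (1 + a) * (S / 2)) * r := by ring
      have hc4 : (Real.log (1 + a) * (S / 2)) * r ≤ Real.log (1 + a) * (S - a) * r := by
        apply mul_le_mul_of_nonneg_right _ (by linarith)
        exact mul_le_mul_of_nonneg_left (by linarith) hL.le
      linarith
    obtain ⟨r₀, hr₀⟩ := eventually_atTop.mp evstar
    refine ⟨intCnt μ c (max r₀ 2), intCnt_nonneg' μ c (by
      have := le_max_right r₀ 2; linarith), fun r hr => ?_⟩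
    have hCnn : 0 ≤ intCnt μ c (max r₀ 2) := intCnt_nonneg' μ c (by
      have := le_max_right r₀ 2; linarith)
    rcases le_or_gt r (max r₀ 2) with hle | hgt
    · have h1 : intCnt μ c r ≤ intCnt μ c (max r₀ 2) := intCnt_mono' μ c (by linarith) hle
      have hlogr : 0 < Real.log (r + a) := Real.log_pos (by linarith)
      have h2 : 0 ≤ (1 + a / r + (1 + a) * Real.log (1 + a) / Real.log (r + a)) *
          intCnt μ 0 (r + a) := by
        apply mul_nonneg
        · have h3 : 0 ≤ a / r := div_nonneg ha.le (by linarith)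
          have h4 : 0 ≤ (1 + a) * Real.log (1 + a) / Real.log (r + a) :=
            div_nonneg (mul_nonneg (by linarith) hL.le) hlogr.le
          linarith
        · exact intCnt_nonneg' μ 0 (by linarith)
      linarith
    · obtain ⟨hA, hB⟩ := hr₀ r (le_trans (le_max_left _ _) hgt.le)
      have hmain := main_est μ c r ha hr hA hB
      linarith
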